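/- Let K ⊆ ℝ^I be a compact space (with the product topology) such that D := Σ(I) ∩ K is dense in K. Define Γ := {A ∈ [I]^{≤ω} : for every x ∈ K, the function x restricted to A (extended by 0 outside A) belongs to K}, and for A ∈ Γ define r_A : K → K by r_A(x) := x·1_A (i.e. r_A(x)(i) = x(i) for i ∈ A and 0 otherwise). Then each r_A is a continuous retraction of K onto a metrizable compact subset, the family (r_A)_{A ∈ Γ} is commutative (r_A ∘ r_B = r_B ∘ r_A = r_{A∩B}), Γ is closed under countable increasing unions, and ⋃_{A ∈ Γ} r_A[K] = D. -/

import Mathlib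

open Set Function Filter Topology
section Aux

variable {I : Type*}

open Classical in
/-- Choice of an approximating element of `D`. -/
noncomputable def ccsPick (D : Set (I → ℝ)) (L : List (I × ℚ)) (m : ℕ) : I → ℝ :=
  if h : ∃ d ∈ D, ∀ p ∈ L, |d p.1 - (p.2 : ℝ)| < 1 / (m + 1) then h.choose else 0

lemma ccsPick_spec {D : Set (I → ℝ)} {L : List (I × ℚ)} {m : ℕ}
    (h : ∃ d ∈ D, ∀ p ∈ L, |d p.1 - (p.2 : ℝ)| < 1 / (m + 1)) :
    ccsPick D L m ∈ D ∧ ∀ p ∈ L, |ccsPick D L m p.1 - (p.2 : ℝ)| < 1 / (m + 1) := by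
  rw [ccsPick, dif_pos h]
  exact ⟨h.choose_spec.1, h.choose_spec.2⟩

open Classical in
lemma ccsPick_eq_zero {D : Set (I → ℝ)} {L : List (I × ℚ)} {m : ℕ}
    (h : ¬ ∃ d ∈ D, ∀ p ∈ L, |d p.1 - (p.2 : ℝ)| < 1 / (m + 1)) :
    ccsPick D L m = 0 := by
  rw [ccsPick, dif_neg h]

/-- One step of the closure construction. -/
def ccsStep (D : Set (I → ℝ)) (B : Set I) : Set I :=
  B ∪ ⋃ L ∈ {L : List (I × ℚ) | ∀ p ∈ L, p.1 ∈ B}, ⋃ m : ℕ, support (ccsPick D L m)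

lemma ccsStep_subset (D : Set (I → ℝ)) (B : Set I) : B ⊆ ccsStep D B :=
  subset_union_left

lemma ccsStep_countable {D : Set (I → ℝ)} (hD : ∀ d ∈ D, (support d).Countable)
    {B : Set I} (hB : B.Countable) : (ccsStep D B).Countable := by
  refine hB.union (Set.Countable.biUnion ?_ ?_)
  · have hBc : Countable B := hB
    set g : List (B × ℚ) → List (I × ℚ) :=
      fun l => l.map (fun p => (p.1.1, p.2)) with hg
    have hsub : {L : List (I × ℚ) | ∀ p ∈ L, p.1 ∈ B} ⊆ Set.range g := by
      intro L hL
      induction L with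
      | nil => exact ⟨[], rfl⟩
      | cons a l ih =>
        obtain ⟨l', hl'⟩ := ih fun p hp => hL p (List.mem_cons_of_mem a hp)
        exact ⟨(⟨a.1, hL a (List.mem_cons_self)⟩, a.2) :: l', by
          simp [hg, ← hl']⟩
    exact (Set.countable_range g).mono hsub
  · intro L _
    refine countable_iUnion fun m => ?_
    by_cases h : ∃ d ∈ D, ∀ p ∈ L, |d p.1 - (p.2 : ℝ)| < 1 / (m + 1)
    · exact hD _ (ccsPick_spec h).1
    · rw [ccsPick_eq_zero h]
      simp

/-- The key cofinality lemma: every countable set is contained in a countable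
set `A` such that `r_A` maps `K` into `K`. -/
lemma ccs_exists_mem_Gamma (K : Set (I → ℝ)) (hK : IsCompact K)
    (hdense : K ⊆ closure {x ∈ K | (Function.support x).Countable})
    {S : Set I} (hS : S.Countable) :
    ∃ A : Set I, S ⊆ A ∧ A.Countable ∧ ∀ y ∈ K, A.indicator y ∈ K := by
  classical
  set D : Set (I → ℝ) := {x ∈ K | (Function.support x).Countable} with hD
  have hDsupp : ∀ d ∈ D, (support d).Countable := fun d hd => hd.2
  have hDK : D ⊆ K := fun d hd => hd.1
  have hKclosed : IsClosed K := hK.isClosed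
  set A : Set I := ⋃ n, (ccsStep D)^[n] S with hA
  have hmono : Monotone fun n => (ccsStep D)^[n] S := by
    refine monotone_nat_of_le_succ fun n => ?_
    rw [Function.iterate_succ_apply']
    exact ccsStep_subset D _
  have hcnt : ∀ n, ((ccsStep D)^[n] S).Countable := by
    intro n
    induction n with
    | zero => simpa using hS
    | succ n ih =>
      rw [Function.iterate_succ_apply']
      exact ccsStep_countable hDsupp ih
  have hstepA : ∀ n, ccsStep D ((ccsStep D)^[n] S) ⊆ A := by
    intro n
    have he : ccsStep D ((ccsStep D)^[n] S) = (ccsStep D)^[n + 1] S :=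
      (Function.iterate_succ_apply' _ _ _).symm
    rw [he]
    exact subset_iUnion (fun n => (ccsStep D)^[n] S) (n + 1)
  refine ⟨A, by simpa using subset_iUnion (fun n => (ccsStep D)^[n] S) 0,
    countable_iUnion hcnt, ?_⟩
  intro y hy
  have hclosureD : closure D ⊆ K := hKclosed.closure_subset_iff.2 hDK
  refine hclosureD ?_
  rw [mem_closure_iff_nhds]
  intro U hU
  rw [nhds_pi, Filter.mem_pi] at hU
  obtain ⟨F, hFfin, t, ht, hsub⟩ := hU
  have hball : ∀ i, ∃ ε > 0, Metric.ball (A.indicator y i) ε ⊆ t i := fun i =>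
    Metric.mem_nhds_iff.1 (ht i)
  choose ε hε hball using hball
  -- a uniform lower bound for ε on F
  obtain ⟨δ, hδ0, hδle⟩ : ∃ δ : ℝ, 0 < δ ∧ ∀ i ∈ F, δ ≤ ε i := by
    rcases hFfin.toFinset.eq_empty_or_nonempty with h | h
    · refine ⟨1, one_pos, fun i hi => ?_⟩
      exact absurd (hFfin.mem_toFinset.2 hi) (by simp [h])
    · refine ⟨hFfin.toFinset.inf' h ε, ?_, fun i hi => ?_⟩
      · rw [Finset.lt_inf'_iff]
        exact fun i _ => hε i
      · exact Finset.inf'_le ε (hFfin.mem_toFinset.2 hi)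
  obtain ⟨m, hm⟩ := exists_nat_gt (2 / δ)
  have hm1 : (0 : ℝ) < m + 1 := by positivity
  have h2m : 2 / (m + 1 : ℝ) < δ := by
    rw [div_lt_iff₀ hm1]
    rw [div_lt_iff₀ hδ0] at hm
    nlinarith
  have hmpos : (0 : ℝ) < 1 / (m + 1) := by positivity
  -- the relevant finite part of A lies in some stage of the construction
  have hGfin : (F ∩ A).Finite := hFfin.inter_of_left A
  obtain ⟨n, hGn⟩ : ∃ n, F ∩ A ⊆ (ccsStep D)^[n] S := by
    obtain ⟨J, hJfin, hJ⟩ := Set.finite_subset_iUnion hGfin inter_subset_right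
    rcases hJfin.bddAbove with ⟨N, hN⟩
    refine ⟨N, hJ.trans ?_⟩
    refine iUnion₂_subset fun j hj => hmono (hN hj)
  -- rational approximations of y
  have hq : ∀ i, ∃ q : ℚ, |y i - (q : ℝ)| < 1 / (m + 1) := fun i =>
    exists_rat_near (y i) hmpos
  choose q hqy using hq
  set L : List (I × ℚ) := hGfin.toFinset.toList.map fun i => (i, q i) with hLdef
  have hmemL : ∀ p ∈ L, p.1 ∈ F ∩ A ∧ p.2 = q p.1 := by
    intro p hp
    rw [hLdef, List.mem_map] at hp
    obtain ⟨i, hi, rfl⟩ := hp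
    exact ⟨hGfin.mem_toFinset.1 (Finset.mem_toList.1 hi), rfl⟩
  have hL : ∀ p ∈ L, p.1 ∈ (ccsStep D)^[n] S := fun p hp => hGn (hmemL p hp).1
  -- existence of an approximating element of D
  have hex : ∃ d ∈ D, ∀ p ∈ L, |d p.1 - (p.2 : ℝ)| < 1 / (m + 1) := by
    set V : Set (I → ℝ) := {z | ∀ p ∈ L, |z p.1 - (p.2 : ℝ)| < 1 / (m + 1)} with hV
    have hVnhds : V ∈ 𝓝 y := by
      have hVeq : V = ⋂ p ∈ L.toFinset, {z : I → ℝ | |z p.1 - (p.2 : ℝ)| < 1 / (m + 1)} := by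
        ext z
        simp [hV, List.mem_toFinset]
      rw [hVeq]
      refine (Filter.biInter_mem L.toFinset.finite_toSet).2 fun p hp => ?_
      have hpL := hmemL p (List.mem_toFinset.1 hp)
      have hopen : IsOpen {z : I → ℝ | |z p.1 - (p.2 : ℝ)| < 1 / (m + 1)} := by
        have : {z : I → ℝ | |z p.1 - (p.2 : ℝ)| < 1 / (m + 1)} =
            (fun z : I → ℝ => z p.1) ⁻¹' Metric.ball (p.2 : ℝ) (1 / (m + 1)) := by
          ext z
          simp [Metric.mem_ball, Real.dist_eq]
        rw [this]
        exact (continuous_apply p.1).isOpen_preimage _ Metric.isOpen_ball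
      refine hopen.mem_nhds ?_
      show |y p.1 - (p.2 : ℝ)| < 1 / (m + 1)
      rw [hpL.2]
      exact hqy p.1
    obtain ⟨d, hdV, hdD⟩ := mem_closure_iff_nhds.1 (hdense hy) V hVnhds
    exact ⟨d, hdD, hdV⟩
  obtain ⟨hdD, hdapp⟩ := ccsPick_spec hex
  set d : I → ℝ := ccsPick D L m with hd
  have hsuppd : support d ⊆ A := by
    have h1 : support d ⊆ ccsStep D ((ccsStep D)^[n] S) := by
      intro i hi
      exact Or.inr (Set.mem_biUnion hL (Set.mem_iUnion.2 ⟨m, hi⟩))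
    exact h1.trans (hstepA n)
  refine ⟨d, hsub ?_, hdD⟩
  intro i hiF
  by_cases hiA : i ∈ A
  · have hiG : i ∈ F ∩ A := ⟨hiF, hiA⟩
    have hpL : (i, q i) ∈ L := by
      rw [hLdef, List.mem_map]
      exact ⟨i, Finset.mem_toList.2 (hGfin.mem_toFinset.2 hiG), rfl⟩
    have h1 : |d i - (q i : ℝ)| < 1 / (m + 1) := hdapp _ hpL
    have h2 : |y i - (q i : ℝ)| < 1 / (m + 1) := hqy i
    apply hball i
    rw [Metric.mem_ball, Real.dist_eq, Set.indicator_of_mem hiA]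
    have h3 : |d i - y i| ≤ |d i - (q i : ℝ)| + |(q i : ℝ) - y i| := abs_sub_le _ _ _
    have h4 : |(q i : ℝ) - y i| = |y i - (q i : ℝ)| := abs_sub_comm _ _
    have h5 := hδle i hiF
    have h6 : 1 / (m + 1 : ℝ) + 1 / (m + 1 : ℝ) = 2 / (m + 1 : ℝ) := by ring
    linarith
  · have hd0 : d i = 0 := by
      by_contra h
      exact hiA (hsuppd h)
    apply hball i
    rw [Metric.mem_ball, Real.dist_eq, Set.indicator_of_notMem hiA, hd0]
    simpa using hε i

end Aux

theorem canonical_commutative_skeleton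
    {I : Type*} (K : Set (I → ℝ))
    (hK : IsCompact K)
    (hdense : K ⊆ closure {x ∈ K | (Function.support x).Countable}) :
    let D : Set (I → ℝ) := {x ∈ K | (Function.support x).Countable}
    let Γ : Set (Set I) := {A | A.Countable ∧ ∀ x ∈ K, A.indicator x ∈ K}
    -- each r_A is a continuous retraction of K onto a metrizable compact subset
    (∀ A ∈ Γ, Continuous (fun x : I → ℝ => A.indicator x) ∧
      (∀ x ∈ K, A.indicator x ∈ K) ∧
      (∀ x : I → ℝ, A.indicator (A.indicator x) = A.indicator x) ∧
      IsCompact ((fun x : I → ℝ => A.indicator x) '' K) ∧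
      TopologicalSpace.MetrizableSpace ((fun x : I → ℝ => A.indicator x) '' K)) ∧
    -- commutativity: r_A ∘ r_B = r_B ∘ r_A = r_{A ∩ B}
    (∀ A ∈ Γ, ∀ B ∈ Γ, ∀ x : I → ℝ,
      A.indicator (B.indicator x) = (A ∩ B).indicator x ∧
      B.indicator (A.indicator x) = (A ∩ B).indicator x) ∧
    -- Γ is closed under countable increasing unions
    (∀ f : ℕ → Set I, (∀ n, f n ∈ Γ) → Monotone f → (⋃ n, f n) ∈ Γ) ∧
    -- the union of the images of the retractions is exactly D
    (⋃ A ∈ Γ, (fun x : I → ℝ => A.indicator x) '' K) = D := by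
  classical
  intro D Γ
  have hcont : ∀ A : Set I, Continuous (fun x : I → ℝ => A.indicator x) := by
    intro A
    refine continuous_pi fun i => ?_
    by_cases h : i ∈ A
    · have : (fun x : I → ℝ => A.indicator x i) = fun x => x i := by
        ext x
        simp [Set.indicator_of_mem h]
      rw [this]
      exact continuous_apply i
    · have : (fun x : I → ℝ => A.indicator x i) = fun _ => 0 := by
        ext x
        simp [Set.indicator_of_notMem h]
      rw [this]
      exact continuous_const
  refine ⟨?_, ?_, ?_, ?_⟩
  · -- retraction properties
    rintro A ⟨hAc, hAK⟩
    refine ⟨hcont A, hAK, fun x => by rw [Set.indicator_indicator, Set.inter_self], 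
      hK.image (hcont A), ?_⟩
    -- metrizability
    set E : Set (I → ℝ) := (fun x : I → ℝ => A.indicator x) '' K with hE
    haveI : CompactSpace E := isCompact_iff_compactSpace.1 (hK.image (hcont A))
    haveI : Countable A := hAc.to_subtype
    let φ : E → (A → ℝ) := fun z i => z.1 i
    have hφc : Continuous φ :=
      continuous_pi fun i => (continuous_apply (i : I)).comp continuous_subtype_val
    have hφinj : Function.Injective φ := by
      rintro ⟨z, hz⟩ ⟨w, hw⟩ h
      ext i
      by_cases hi : i ∈ A
      · exact congrFun h ⟨i, hi⟩
      · obtain ⟨x, _, rfl⟩ := hz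
        obtain ⟨x', _, rfl⟩ := hw
        show A.indicator x i = A.indicator x' i
        rw [Set.indicator_of_notMem hi, Set.indicator_of_notMem hi]
    exact (hφc.isClosedEmbedding hφinj).toIsEmbedding.metrizableSpace
  · -- commutativity
    rintro A - B - x
    exact ⟨by rw [Set.indicator_indicator], by rw [Set.indicator_indicator, Set.inter_comm]⟩
  · -- closure under countable increasing unions
    intro f hf hmono
    refine ⟨countable_iUnion fun n => (hf n).1, fun x hx => ?_⟩
    have htend : Tendsto (fun n => (f n).indicator x) atTop (𝓝 ((⋃ n, f n).indicator x)) := by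
      rw [tendsto_pi_nhds]
      intro i
      by_cases hi : i ∈ ⋃ n, f n
      · obtain ⟨N, hN⟩ := Set.mem_iUnion.1 hi
        refine tendsto_atTop_of_eventually_const (i₀ := N) fun n hn => ?_
        rw [Set.indicator_of_mem (hmono hn hN), Set.indicator_of_mem hi]
      · refine tendsto_atTop_of_eventually_const (i₀ := 0) fun n _ => ?_
        rw [Set.indicator_of_notMem fun h => hi (Set.mem_iUnion.2 ⟨n, h⟩),
          Set.indicator_of_notMem hi]
    exact hK.isClosed.mem_of_tendsto htend
      (Filter.Eventually.of_forall fun n => (hf n).2 x hx)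
  · -- the union of the images equals D
    ext z
    constructor
    · intro hz
      obtain ⟨A, hA, x, hx, rfl⟩ := by simpa using hz
      exact ⟨hA.2 x hx, hA.1.mono Set.support_indicator_subset⟩
    · rintro ⟨hzK, hzc⟩
      obtain ⟨A, hSA, hAc, hAK⟩ := ccs_exists_mem_Gamma K hK hdense hzc
      simp only [Set.mem_iUnion]
      exact ⟨A, ⟨hAc, hAK⟩, z, hzK, Set.indicator_eq_self.2 hSA⟩
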